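/- Let p be a prime, α a positive integer, and G the elementary abelian group (Z/pZ)^α. Let k < p be a positive integer, a_1,...,a_k distinct elements of G, and b_1,...,b_k arbitrary elements of G. Then some permutation π ∈ S_k makes a_1·b_{π(1)}, ..., a_k·b_{π(k)} pairwise distinct. -/

import Mathlib

open Finset Matrix

section Identity

variable {R : Type*} [CommRing R] {k : ℕ}

private lemma dkss_force_eq (σ : Equiv.Perm (Fin k)) (m : Fin k → ℕ)
    (hinj : Function.Injective m) (hle : ∀ i, m i ≤ (σ i).val) :
    ∀ i, m i = (σ i).val := by
  have hlt : ∀ i, m i < k := fun i => lt_of_le_of_lt (hle i) (σ i).isLt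
  have hinj' : Function.Injective (fun i => (⟨m i, hlt i⟩ : Fin k)) := by
    intro i j h
    exact hinj (by simpa [Fin.ext_iff] using h)
  have hbij : Function.Bijective (fun i => (⟨m i, hlt i⟩ : Fin k)) :=
    Finite.injective_iff_bijective.mp hinj'
  have hsum : ∑ i, m i = ∑ i, (σ i).val := by
    have h1 : ∑ i, m i = ∑ j : Fin k, (j : ℕ) := by
      have := Equiv.sum_comp (Equiv.ofBijective _ hbij) (fun j : Fin k => (j : ℕ))
      simpa using this
    have h2 : ∑ i, (σ i).val = ∑ j : Fin k, (j : ℕ) :=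
      Equiv.sum_comp σ (fun j : Fin k => (j : ℕ))
    rw [h1, h2]
  have := (Finset.sum_eq_sum_iff_of_le (fun i _ => hle i)).mp hsum
  exact fun i => this i (Finset.mem_univ i)

private lemma dkss_det_row_pow (a b : Fin k → R) (σ : Equiv.Perm (Fin k)) :
    (Matrix.of fun i t => (a t + b i) ^ (σ i).val).det
      = ((Equiv.Perm.sign σ : ℤ) : R) * (Matrix.vandermonde a).det := by
  classical
  set f := (Matrix.detRowAlternating : (Fin k → R) [⋀^Fin k]→ₗ[R] R) with hf
  set c : Fin k → ℕ → R :=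
    fun i m => b i ^ ((σ i).val - m) * (((σ i).val).choose m : R) with hc
  set w : ℕ → (Fin k → R) := fun m => fun t => a t ^ m with hw
  have hrow : ∀ i : Fin k, (fun t => (a t + b i) ^ (σ i).val)
      = ∑ m ∈ Finset.range ((σ i).val + 1), c i m • w m := by
    intro i
    funext t
    simp only [Finset.sum_apply, Pi.smul_apply, smul_eq_mul, hc, hw]
    rw [add_pow]
    exact Finset.sum_congr rfl (fun m _ => by ring)
  have h1 : (Matrix.of fun i t => (a t + b i) ^ (σ i).val).det
      = f (fun i => ∑ m ∈ Finset.range ((σ i).val + 1), c i m • w m) := by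
    show f (Matrix.of fun i t => (a t + b i) ^ (σ i).val) = _
    congr 1
    funext i
    exact hrow i
  have h2 : f (fun i => ∑ m ∈ Finset.range ((σ i).val + 1), c i m • w m)
      = ∑ r ∈ Fintype.piFinset (fun i => Finset.range ((σ i).val + 1)),
          f (fun i => c i (r i) • w (r i)) :=
    f.toMultilinearMap.map_sum_finset _ _
  rw [h1, h2]
  have hsmul : ∀ r : Fin k → ℕ,
      f (fun i => c i (r i) • w (r i))
        = (∏ i, c i (r i)) * f (fun i => w (r i)) := by
    intro r
    have := f.toMultilinearMap.map_smul_univ (fun i => c i (r i)) (fun i => w (r i))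
    simpa [smul_eq_mul] using this
  have hzero : ∀ r ∈ Fintype.piFinset (fun i => Finset.range ((σ i).val + 1)),
      r ≠ (fun i => (σ i).val) →
      f (fun i => c i (r i) • w (r i)) = 0 := by
    intro r hr hne
    by_cases hinj : Function.Injective r
    · exact absurd (funext (dkss_force_eq σ r hinj
        (fun i => Nat.lt_succ_iff.mp (Finset.mem_range.mp
          (Fintype.mem_piFinset.mp hr i))))) hne
    · rw [Function.not_injective_iff] at hinj
      obtain ⟨i, j, hval, hij⟩ := hinj
      rw [hsmul r]
      have hz : f (fun i => w (r i)) = 0 := by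
        refine f.map_eq_zero_of_eq (fun i => w (r i)) ?_ hij
        show w (r i) = w (r j)
        rw [hval]
      rw [hz, mul_zero]
  rw [Finset.sum_eq_single_of_mem (fun i => (σ i).val) (by
        rw [Fintype.mem_piFinset]
        intro i
        exact Finset.mem_range.mpr (Nat.lt_succ_self _)) hzero]
  have hcoeff : (∏ i, c i (σ i).val) = 1 := by
    simp [hc]
  rw [hsmul, hcoeff, one_mul]
  have hmat : (fun i => w (σ i).val)
      = fun i => ((Matrix.vandermonde a)ᵀ.submatrix σ id) i := by
    funext i t
    simp [hw, Matrix.vandermonde, Matrix.submatrix, Matrix.transpose]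
  show f (fun i => w (σ i).val) = _
  rw [hmat]
  show ((Matrix.vandermonde a)ᵀ.submatrix σ id).det = _
  rw [Matrix.det_permute, Matrix.det_transpose]

private lemma dkss_key_sum (a b : Fin k → R) :
    ∑ π : Equiv.Perm (Fin k), (Matrix.vandermonde (fun i => a i + b (π i))).det
      = (k.factorial : R) * (Matrix.vandermonde a).det := by
  classical
  have step1 : ∀ π : Equiv.Perm (Fin k),
      (Matrix.vandermonde (fun i => a i + b (π i))).det
        = ((Equiv.Perm.sign π : ℤ) : R)
            * (Matrix.vandermonde (fun i => a (π⁻¹ i) + b i)).det := by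
    intro π
    have hmat : Matrix.vandermonde (fun i => a i + b (π i))
        = (Matrix.vandermonde (fun i => a (π⁻¹ i) + b i)).submatrix π id := by
      ext i j
      simp [Matrix.vandermonde]
    rw [hmat, Matrix.det_permute]
  simp only [step1]
  have step2 : ∑ π : Equiv.Perm (Fin k),
      ((Equiv.Perm.sign π : ℤ) : R) * (Matrix.vandermonde (fun i => a (π⁻¹ i) + b i)).det
      = ∑ ρ : Equiv.Perm (Fin k),
      ((Equiv.Perm.sign ρ : ℤ) : R) * (Matrix.vandermonde (fun i => a (ρ i) + b i)).det := by
    refine Fintype.sum_equiv (Equiv.inv (Equiv.Perm (Fin k))) _ _ (fun π => ?_)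
    simp
  rw [step2]
  have step3 : ∀ ρ : Equiv.Perm (Fin k),
      (Matrix.vandermonde (fun i => a (ρ i) + b i)).det
        = ∑ σ : Equiv.Perm (Fin k),
            ((Equiv.Perm.sign σ : ℤ) : R) * ∏ i, (a (ρ i) + b i) ^ (σ i).val := by
    intro ρ
    rw [← Matrix.det_transpose, Matrix.det_apply']
    refine Finset.sum_congr rfl (fun σ _ => ?_)
    congr 1
  simp only [step3, Finset.mul_sum]
  rw [Finset.sum_comm]
  have step4 : ∀ σ : Equiv.Perm (Fin k),
      ∑ ρ : Equiv.Perm (Fin k),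
        ((Equiv.Perm.sign ρ : ℤ) : R) *
          (((Equiv.Perm.sign σ : ℤ) : R) * ∏ i, (a (ρ i) + b i) ^ (σ i).val)
      = ((Equiv.Perm.sign σ : ℤ) : R)
          * (Matrix.of fun i t => (a t + b i) ^ (σ i).val)ᵀ.det := by
    intro σ
    rw [Matrix.det_apply', Finset.mul_sum]
    refine Finset.sum_congr rfl (fun ρ _ => ?_)
    have hprod : ∏ i, ((Matrix.of fun i t => (a t + b i) ^ (σ i).val)ᵀ) (ρ i) i
        = ∏ i, (a (ρ i) + b i) ^ (σ i).val := by
      refine Finset.prod_congr rfl (fun i _ => ?_)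
      simp
    rw [hprod]
    ring
  simp only [step4]
  have step5 : ∀ σ : Equiv.Perm (Fin k),
      ((Equiv.Perm.sign σ : ℤ) : R)
          * (Matrix.of fun i t => (a t + b i) ^ (σ i).val)ᵀ.det
      = (Matrix.vandermonde a).det := by
    intro σ
    rw [Matrix.det_transpose, dkss_det_row_pow a b σ, ← mul_assoc]
    have hsq : ((Equiv.Perm.sign σ : ℤ) : R) * ((Equiv.Perm.sign σ : ℤ) : R) = 1 := by
      rcases Int.units_eq_one_or (Equiv.Perm.sign σ) with h | h <;> rw [h] <;> norm_num
    rw [hsq, one_mul]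
  simp only [step5]
  rw [Finset.sum_const, Finset.card_univ, Fintype.card_perm, Fintype.card_fin,
    nsmul_eq_mul]

end Identity

/-- DKSS theorem, elementary abelian case: in `(ℤ/pℤ)^α`, given `k < p` distinct
elements `a i` and arbitrary `b i`, some permutation makes the products distinct. -/
theorem dkss_elementary_abelian {p α : ℕ} (hp : p.Prime) (hα : 0 < α)
    {k : ℕ} (hk : 0 < k) (hkp : k < p)
    (a b : Fin k → Multiplicative (Fin α → ZMod p)) (ha : Function.Injective a) :
    ∃ π : Equiv.Perm (Fin k), Function.Injective (fun i => a i * b (π i)) := by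
  haveI := Fact.mk hp
  set F := GaloisField p α with hF
  have hfr : Module.finrank (ZMod p) F = α := GaloisField.finrank p hα.ne'
  let bas : Module.Basis (Fin α) (ZMod p) F := Module.finBasisOfFinrankEq (ZMod p) F hfr
  let e : F ≃ₗ[ZMod p] (Fin α → ZMod p) := bas.equivFun
  set A : Fin k → F := fun i => e.symm (Multiplicative.toAdd (a i)) with hA
  set B : Fin k → F := fun i => e.symm (Multiplicative.toAdd (b i)) with hB
  have hAinj : Function.Injective A :=
    e.symm.injective.comp (Multiplicative.toAdd.injective.comp ha)
  have hV : (Matrix.vandermonde A).det ≠ 0 :=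
    Matrix.det_vandermonde_ne_zero_iff.mpr hAinj
  have hfac : (k.factorial : F) ≠ 0 := by
    intro h0
    have hdvd : p ∣ k.factorial := (CharP.cast_eq_zero_iff F p k.factorial).mp h0
    exact absurd ((Nat.Prime.dvd_factorial hp).mp hdvd) (not_le.mpr hkp)
  have hsum := dkss_key_sum A B
  obtain ⟨π, hπ⟩ : ∃ π : Equiv.Perm (Fin k),
      (Matrix.vandermonde (fun i => A i + B (π i))).det ≠ 0 := by
    by_contra h
    push_neg at h
    rw [Finset.sum_eq_zero (fun π _ => h π)] at hsum
    exact (mul_ne_zero hfac hV) hsum.symm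
  refine ⟨π, ?_⟩
  have hinj : Function.Injective (fun i => A i + B (π i)) :=
    Matrix.det_vandermonde_ne_zero_iff.mp hπ
  intro i j hij
  apply hinj
  have hadd : Multiplicative.toAdd (a i * b (π i)) = Multiplicative.toAdd (a j * b (π j)) := by
    rw [show a i * b (π i) = a j * b (π j) from hij]
  simp only [toAdd_mul] at hadd
  simp only [hA, hB, ← map_add, hadd]
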